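/- Let a, b, c, d be complex numbers with a ≠ 0 and b ≠ 0, and assume |c|² + |d|² < 1. Define p₁ = −(|a|²+|b|²) and p₃ = −2Re(conj(a)·b·c·conj(d)) + |c|²(|b|²−|a|²). Then |p₃| < −p₁, i.e. |−2Re(conj(a)·b·c·conj(d)) + |c|²(|b|²−|a|²)| < |a|² + |b|². -/

import Mathlib

open ComplexConjugate

/-- If `a ≠ 0`, `b ≠ 0` and `|c|² + |d|² < 1`, then `|p₃| < -p₁`. -/
theorem stmt_3 (a b c d : ℂ) (ha : a ≠ 0) (hb : b ≠ 0)
    (hcd : ‖c‖ ^ 2 + ‖d‖ ^ 2 < 1)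
    (p₁ p₃ : ℝ)
    (hp₁ : p₁ = -(‖a‖ ^ 2 + ‖b‖ ^ 2))
    (hp₃ : p₃ = -2 * (conj a * b * c * conj d).re
        + ‖c‖ ^ 2 * (‖b‖ ^ 2 - ‖a‖ ^ 2)) :
    |p₃| < -p₁ := by
  set A := ‖a‖ with hA'
  set B := ‖b‖ with hB'
  set C := ‖c‖ with hC'
  set D := ‖d‖ with hD'
  have hA : 0 < A := norm_pos_iff.mpr ha
  have hB : 0 < B := norm_pos_iff.mpr hb
  have hC : 0 ≤ C := norm_nonneg c
  have hD : 0 ≤ D := norm_nonneg d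
  have hr : |(conj a * b * c * conj d).re| ≤ A * B * C * D := by
    calc |(conj a * b * c * conj d).re| ≤ ‖conj a * b * c * conj d‖ :=
          Complex.abs_re_le_norm _
      _ = A * B * C * D := by simp [map_mul]; rfl
  rw [abs_le] at hr
  obtain ⟨hr1, hr2⟩ := hr
  have hS : 0 < A ^ 2 + B ^ 2 := by positivity
  -- Cauchy–Schwarz via Lagrange identity
  have h2 : C ^ 2 * (C ^ 2 + D ^ 2) < 1 := by nlinarith [sq_nonneg D, sq_nonneg (C^2 + D^2)]
  have key : ∀ s : ℝ, s = B ^ 2 - A ^ 2 ∨ s = A ^ 2 - B ^ 2 →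
      2 * A * B * (C * D) + s * C ^ 2 < A ^ 2 + B ^ 2 := by
    intro s hs
    have hsq : (2 * A * B) ^ 2 + s ^ 2 = (A ^ 2 + B ^ 2) ^ 2 := by
      rcases hs with h | h <;> rw [h] <;> ring
    have h1 : (2 * A * B * (C * D) + s * C ^ 2) ^ 2
        ≤ (A ^ 2 + B ^ 2) ^ 2 * (C ^ 2 * (C ^ 2 + D ^ 2)) := by
      nlinarith [sq_nonneg (2 * A * B * C ^ 2 - s * (C * D))]
    have h3 : (2 * A * B * (C * D) + s * C ^ 2) ^ 2 < (A ^ 2 + B ^ 2) ^ 2 := by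
      calc (2 * A * B * (C * D) + s * C ^ 2) ^ 2
          ≤ (A ^ 2 + B ^ 2) ^ 2 * (C ^ 2 * (C ^ 2 + D ^ 2)) := h1
        _ < (A ^ 2 + B ^ 2) ^ 2 * 1 := by
            apply mul_lt_mul_of_pos_left h2 (by positivity)
        _ = (A ^ 2 + B ^ 2) ^ 2 := by ring
    nlinarith [hS, h3, sq_nonneg (2 * A * B * (C * D) + s * C ^ 2 - (A ^ 2 + B ^ 2))]
  have k1 := key (B ^ 2 - A ^ 2) (Or.inl rfl)
  have k2 := key (A ^ 2 - B ^ 2) (Or.inr rfl)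
  rw [hp₁, hp₃, neg_neg, abs_lt]
  constructor <;> nlinarith [k1, k2, hr1, hr2]
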